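/- Let k, ℓ be natural numbers, let G be a finite simple graph, and let P = (u₀, u₁, …, u_q, u_{q+1}) be a path in G (a sequence of distinct vertices with consecutive vertices adjacent) with q ≥ k + 2 such that every vertex u_i with 1 ≤ i ≤ q + 1 has degree exactly 2 in G. Let F ⊆ E(G) be inclusion-wise minimal with the property that G/F ∈ T_ℓ, and suppose |F| ≤ k. Then no edge of F is incident to any of the vertices u₁, …, u_q (i.e., to any vertex of V(P) \ {u₀, u_{q+1}}). -/

import Mathlib

/-- The graph `G/F` obtained from `G` by contracting all edges of `F`: its vertices are the
connected components of the spanning subgraph `(V(G), F)`, and two distinct components are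
adjacent iff `G` has an edge with one endpoint in each. -/
def contractEdges {V : Type} (G : SimpleGraph V) (F : Set (Sym2 V)) :
    SimpleGraph ((SimpleGraph.fromEdgeSet F).ConnectedComponent) :=
  SimpleGraph.fromRel (fun c d =>
    ∃ u u' : V, G.Adj u u' ∧ (SimpleGraph.fromEdgeSet F).connectedComponentMk u = c ∧
      (SimpleGraph.fromEdgeSet F).connectedComponentMk u' = d)

/-- `T ∈ 𝕋_ℓ`: `T` is connected and `|E(T)| ≤ |V(T)| - 1 + ℓ`, i.e. `T` can be made into a
tree by deleting at most `ℓ` edges. -/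
def MemTl {W : Type} (T : SimpleGraph W) (ℓ : ℕ) : Prop :=
  T.Connected ∧ T.edgeSet.ncard ≤ Nat.card W - 1 + ℓ

open SimpleGraph
variable {V : Type}
private lemma reach_closed {H : SimpleGraph V} {s : Set V}
    (hs : ∀ y ∈ s, ∀ z, H.Adj y z → z ∈ s) {y z : V} (hy : y ∈ s)
    (h : H.Reachable y z) : z ∈ s := by
  obtain ⟨p⟩ := h
  revert hy
  induction p with
  | nil => exact id
  | cons hadj _ ih => exact fun hy => ih (hs _ hy _ hadj)
private lemma contractEdges_adj' {G : SimpleGraph V} {F : Set (Sym2 V)}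
    {c d : (SimpleGraph.fromEdgeSet F).ConnectedComponent} :
    (contractEdges G F).Adj c d ↔ c ≠ d ∧ ∃ y z : V, G.Adj y z ∧
      (SimpleGraph.fromEdgeSet F).connectedComponentMk y = c ∧
      (SimpleGraph.fromEdgeSet F).connectedComponentMk z = d := by
  unfold contractEdges
  rw [SimpleGraph.fromRel_adj]
  constructor
  · rintro ⟨hne, (⟨y, z, h1, h2, h3⟩ | ⟨y, z, h1, h2, h3⟩)⟩
    · exact ⟨hne, y, z, h1, h2, h3⟩
    · exact ⟨hne, z, y, h1.symm, h3, h2⟩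
  · rintro ⟨hne, y, z, h1, h2, h3⟩
    exact ⟨hne, Or.inl ⟨y, z, h1, h2, h3⟩⟩

private lemma contract_connected {G : SimpleGraph V} (hG : G.Connected) (F : Set (Sym2 V)) :
    (contractEdges G F).Connected := by
  have hne : Nonempty V := hG.nonempty
  have key : ∀ y z : V, (p : G.Walk y z) →
      (contractEdges G F).Reachable ((SimpleGraph.fromEdgeSet F).connectedComponentMk y)
        ((SimpleGraph.fromEdgeSet F).connectedComponentMk z) := by
    intro y z p
    induction p with
    | nil => exact Reachable.refl _
    | @cons y y' z hadj p ih =>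
      by_cases h : (SimpleGraph.fromEdgeSet F).connectedComponentMk y =
          (SimpleGraph.fromEdgeSet F).connectedComponentMk y'
      · rw [h]; exact ih
      · exact (SimpleGraph.Adj.reachable
          (contractEdges_adj'.mpr ⟨h, y, y', hadj, rfl, rfl⟩)).trans ih
  have : Nonempty (SimpleGraph.fromEdgeSet F).ConnectedComponent :=
    ⟨(SimpleGraph.fromEdgeSet F).connectedComponentMk (Classical.arbitrary V)⟩
  refine ⟨?_⟩
  · intro c d
    obtain ⟨y, rfl⟩ := c.exists_rep
    obtain ⟨z, rfl⟩ := d.exists_rep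
    obtain ⟨p⟩ := hG.preconnected y z
    exact key y z p

private lemma connected_of_contract {G : SimpleGraph V} {F : Set (Sym2 V)}
    (hFE : F ⊆ G.edgeSet) (h : (contractEdges G F).Connected) : G.Connected := by
  have hle : SimpleGraph.fromEdgeSet F ≤ G := by
    have := SimpleGraph.fromEdgeSet_mono hFE
    rwa [SimpleGraph.fromEdgeSet_edgeSet] at this
  have hne : Nonempty V := by
    obtain ⟨c⟩ := h.nonempty
    obtain ⟨y, -⟩ := c.exists_rep
    exact ⟨y⟩
  have key : ∀ (c d : (SimpleGraph.fromEdgeSet F).ConnectedComponent)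
      (P : (contractEdges G F).Walk c d) (y z : V),
      (SimpleGraph.fromEdgeSet F).connectedComponentMk y = c →
      (SimpleGraph.fromEdgeSet F).connectedComponentMk z = d → G.Reachable y z := by
    intro c d P
    induction P with
    | nil =>
      intro y z h1 h2
      rw [← h2] at h1
      exact (ConnectedComponent.eq.mp h1).mono hle
    | @cons c c' d hadj P ih =>
      intro y z h1 h2
      obtain ⟨-, y₁, z₁, hyz, hy₁, hz₁⟩ := contractEdges_adj'.mp hadj
      have r1 : G.Reachable y y₁ := by
        rw [← hy₁] at h1; exact (ConnectedComponent.eq.mp h1).mono hle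
      exact (r1.trans hyz.reachable).trans (ih z₁ z hz₁ h2)
  refine ⟨fun y z => ?_⟩
  obtain ⟨P⟩ := h.preconnected ((SimpleGraph.fromEdgeSet F).connectedComponentMk y)
    ((SimpleGraph.fromEdgeSet F).connectedComponentMk z)
  exact key _ _ P y z rfl rfl

private lemma abstract_step [Finite V] (G : SimpleGraph V) (F : Set (Sym2 V))
    (hFE : F ⊆ G.edgeSet) (x v w : V) (hvw : v ≠ w)
    (hnx : G.neighborSet x = {v, w})
    (hfF : s(x,v) ∈ F) (hgF : s(x,w) ∉ F)
    (hexcl :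
      (SimpleGraph.fromEdgeSet (F \ {s(x,v)})).connectedComponentMk v =
        (SimpleGraph.fromEdgeSet (F \ {s(x,v)})).connectedComponentMk w ∨
      ¬ (contractEdges G (F \ {s(x,v)})).Adj
        ((SimpleGraph.fromEdgeSet (F \ {s(x,v)})).connectedComponentMk v)
        ((SimpleGraph.fromEdgeSet (F \ {s(x,v)})).connectedComponentMk w))
    {ℓ : ℕ} (hTl : MemTl (contractEdges G F) ℓ)
    (hconn' : (contractEdges G (F \ {s(x,v)})).Connected) :
    MemTl (contractEdges G (F \ {s(x,v)})) ℓ := by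
  classical
  set F' : Set (Sym2 V) := F \ {s(x,v)} with hF'def
  have hxv : G.Adj x v := by
    have : v ∈ G.neighborSet x := by rw [hnx]; exact Set.mem_insert _ _
    exact this
  have hxw : G.Adj x w := by
    have : w ∈ G.neighborSet x := by rw [hnx]; exact Set.mem_insert_of_mem _ rfl
    exact this
  have hnbr : ∀ t, G.Adj x t → t = v ∨ t = w := by
    intro t ht
    have : t ∈ G.neighborSet x := ht
    rw [hnx] at this
    exact this
  have hxnv : x ≠ v := G.ne_of_adj hxv
  have hxnw : x ≠ w := G.ne_of_adj hxw
  have hiso : ∀ t, ¬ (SimpleGraph.fromEdgeSet F').Adj x t := by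
    intro t ht
    rw [SimpleGraph.fromEdgeSet_adj] at ht
    obtain ⟨⟨hmF, hmne⟩, hne⟩ := ht
    rcases hnbr t (((SimpleGraph.mem_edgeSet G).mp (hFE hmF))) with rfl | rfl
    · exact hmne rfl
    · exact hgF hmF
  have hisoR : ∀ t, (SimpleGraph.fromEdgeSet F').Reachable x t → t = x := by
    intro t h
    have := reach_closed (s := ({x} : Set V))
      (fun y hy z hz => by
        rw [Set.mem_singleton_iff] at hy; subst hy; exact absurd hz (hiso z)) rfl h
    exact this
  have hHK : SimpleGraph.fromEdgeSet F' ≤ SimpleGraph.fromEdgeSet F :=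
    SimpleGraph.fromEdgeSet_mono Set.diff_subset
  have hKxv : (SimpleGraph.fromEdgeSet F).Adj x v := (SimpleGraph.fromEdgeSet_adj _).mpr ⟨hfF, hxnv⟩
  -- reachability characterisation
  have key : ∀ y z : V, (SimpleGraph.fromEdgeSet F).Reachable y z →
      ((SimpleGraph.fromEdgeSet F').Reachable y z ∨
       ((SimpleGraph.fromEdgeSet F').Reachable x y ∧ (SimpleGraph.fromEdgeSet F').Reachable v z) ∨
       ((SimpleGraph.fromEdgeSet F').Reachable v y ∧ (SimpleGraph.fromEdgeSet F').Reachable x z)) := by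
    intro y z h
    obtain ⟨p⟩ := h
    induction p with
    | nil => exact Or.inl (Reachable.refl _)
    | @cons y y' z hadj p ih =>
      rw [SimpleGraph.fromEdgeSet_adj] at hadj
      obtain ⟨hmem, hne⟩ := hadj
      by_cases he : s(y, y') = s(x, v)
      · rw [Sym2.eq_iff] at he
        rcases he with ⟨rfl, rfl⟩ | ⟨rfl, rfl⟩
        · rcases ih with h1 | ⟨h2a, h2b⟩ | ⟨h3a, h3b⟩
          · exact Or.inr (Or.inl ⟨Reachable.refl _, h1⟩)
          · exact absurd (hisoR _ h2a).symm hxnv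
          · exact Or.inl h3b
        · rcases ih with h1 | ⟨h2a, h2b⟩ | ⟨h3a, h3b⟩
          · have hz := hisoR _ h1
            subst hz
            exact Or.inr (Or.inr ⟨Reachable.refl _, Reachable.refl _⟩)
          · exact Or.inl h2b
          · exact absurd (hisoR _ h3a.symm).symm hxnv
      · have hH : (SimpleGraph.fromEdgeSet F').Adj y y' :=
          (SimpleGraph.fromEdgeSet_adj _).mpr ⟨⟨hmem, by simpa using he⟩, hne⟩
        rcases ih with h1 | ⟨h2a, h2b⟩ | ⟨h3a, h3b⟩
        · exact Or.inl (hH.reachable.trans h1)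
        · exact Or.inr (Or.inl ⟨h2a.trans hH.reachable.symm, h2b⟩)
        · exact Or.inr (Or.inr ⟨h3a.trans hH.reachable.symm, h3b⟩)
  have key2 : ∀ y z : V,
      ((SimpleGraph.fromEdgeSet F').Reachable y z ∨
       ((SimpleGraph.fromEdgeSet F').Reachable x y ∧ (SimpleGraph.fromEdgeSet F').Reachable v z) ∨
       ((SimpleGraph.fromEdgeSet F').Reachable v y ∧ (SimpleGraph.fromEdgeSet F').Reachable x z)) →
      (SimpleGraph.fromEdgeSet F).Reachable y z := by
    intro y z h
    rcases h with h1 | ⟨h2a, h2b⟩ | ⟨h3a, h3b⟩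
    · exact h1.mono hHK
    · exact ((h2a.mono hHK).symm.trans hKxv.reachable).trans (h2b.mono hHK)
    · exact ((h3a.mono hHK).symm.trans hKxv.reachable.symm).trans (h3b.mono hHK)
  set φ : (SimpleGraph.fromEdgeSet F').ConnectedComponent →
      (SimpleGraph.fromEdgeSet F).ConnectedComponent :=
    SimpleGraph.ConnectedComponent.map (SimpleGraph.Hom.ofLE hHK) with hφdef
  have φmk : ∀ y : V, φ ((SimpleGraph.fromEdgeSet F').connectedComponentMk y) =
      (SimpleGraph.fromEdgeSet F).connectedComponentMk y := by
    intro y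
    simp [hφdef, SimpleGraph.ConnectedComponent.map_mk]
  set B := (SimpleGraph.fromEdgeSet F').connectedComponentMk x with hBdef
  set A := (SimpleGraph.fromEdgeSet F').connectedComponentMk v with hAdef
  have phieq : ∀ c d : (SimpleGraph.fromEdgeSet F').ConnectedComponent,
      φ c = φ d ↔ (c = d ∨ (c = B ∧ d = A) ∨ (c = A ∧ d = B)) := by
    refine SimpleGraph.ConnectedComponent.ind₂ ?_
    intro y z
    rw [φmk, φmk]
    constructor
    · intro h
      rcases key y z (SimpleGraph.ConnectedComponent.eq.mp h) with h1 | ⟨h2a, h2b⟩ | ⟨h3a, h3b⟩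
      · exact Or.inl (SimpleGraph.ConnectedComponent.sound h1)
      · exact Or.inr (Or.inl ⟨SimpleGraph.ConnectedComponent.sound h2a.symm,
          SimpleGraph.ConnectedComponent.sound h2b.symm⟩)
      · exact Or.inr (Or.inr ⟨SimpleGraph.ConnectedComponent.sound h3a.symm,
          SimpleGraph.ConnectedComponent.sound h3b.symm⟩)
    · intro h
      apply SimpleGraph.ConnectedComponent.sound
      apply key2
      rcases h with h1 | ⟨h2a, h2b⟩ | ⟨h3a, h3b⟩
      · exact Or.inl (SimpleGraph.ConnectedComponent.exact h1)
      · exact Or.inr (Or.inl ⟨(SimpleGraph.ConnectedComponent.exact h2a).symm,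
          (SimpleGraph.ConnectedComponent.exact h2b).symm⟩)
      · exact Or.inr (Or.inr ⟨(SimpleGraph.ConnectedComponent.exact h3a).symm,
          (SimpleGraph.ConnectedComponent.exact h3b).symm⟩)
  have hAB : A ≠ B := by
    intro h
    exact hxnv (hisoR v (SimpleGraph.ConnectedComponent.exact h).symm).symm
  -- no component adjacent to both A and B
  have hdagger : ∀ c, (contractEdges G F').Adj B c → (contractEdges G F').Adj A c → False := by
    intro c h1 h2
    obtain ⟨hne1, y, z, hyz, hy, hz⟩ := contractEdges_adj'.mp h1
    have hyx : y = x := hisoR y (SimpleGraph.ConnectedComponent.exact hy).symm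
    rw [hyx] at hyz
    rcases hnbr z hyz with hzv | hzw
    · have hcA : c = A := by rw [← hz, hzv, hAdef]
      rw [hcA] at h2
      exact (contractEdges G F').loopless.irrefl A h2
    · have hcw : c = (SimpleGraph.fromEdgeSet F').connectedComponentMk w := by rw [← hz, hzw]
      rw [hcw] at h2
      rcases hexcl with heq | hnadj
      · rw [← heq] at h2
        exact (contractEdges G F').loopless.irrefl A h2
      · exact hnadj h2
  -- cardinality of components
  have hbij : Function.Bijective
      (fun c : {c : (SimpleGraph.fromEdgeSet F').ConnectedComponent // ¬ c = B} => φ c.1) := by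
    constructor
    · rintro ⟨c₁, hc₁⟩ ⟨c₂, hc₂⟩ h
      rcases (phieq c₁ c₂).mp h with h' | ⟨h', -⟩ | ⟨-, h'⟩
      · exact Subtype.ext h'
      · exact absurd h' hc₁
      · exact absurd h' hc₂
    · intro d
      obtain ⟨z, hzd⟩ := d.exists_rep
      by_cases hz : (SimpleGraph.fromEdgeSet F').connectedComponentMk z = B
      · refine ⟨⟨A, fun h => hAB h⟩, ?_⟩
        have hzx : z = x := hisoR z (SimpleGraph.ConnectedComponent.exact hz).symm
        rw [← hzd, hzx]
        show φ A = _
        rw [hAdef, φmk]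
        exact SimpleGraph.ConnectedComponent.sound hKxv.reachable.symm
      · refine ⟨⟨_, hz⟩, ?_⟩
        show φ ((SimpleGraph.fromEdgeSet F').connectedComponentMk z) = d
        rw [φmk]
        exact hzd
  have hcards : Nat.card (SimpleGraph.fromEdgeSet F').ConnectedComponent =
      Nat.card (SimpleGraph.fromEdgeSet F).ConnectedComponent + 1 := by
    have h1 : Nat.card {c : (SimpleGraph.fromEdgeSet F').ConnectedComponent // ¬ c = B} =
        Nat.card (SimpleGraph.fromEdgeSet F).ConnectedComponent :=
      Nat.card_eq_of_bijective _ hbij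
    have h5 : Nat.card (SimpleGraph.fromEdgeSet F').ConnectedComponent =
        Nat.card ({c : (SimpleGraph.fromEdgeSet F').ConnectedComponent // c = B} ⊕
          {c : (SimpleGraph.fromEdgeSet F').ConnectedComponent // ¬ c = B}) :=
      (Nat.card_congr (Equiv.sumCompl _)).symm
    rw [Nat.card_sum] at h5
    have h6 : Nat.card {c : (SimpleGraph.fromEdgeSet F').ConnectedComponent // c = B} = 1 := by
      have : Nonempty {c : (SimpleGraph.fromEdgeSet F').ConnectedComponent // c = B} :=
        ⟨⟨B, rfl⟩⟩
      have : Subsingleton {c : (SimpleGraph.fromEdgeSet F').ConnectedComponent // c = B} :=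
        ⟨fun a b => Subtype.ext (a.2.trans b.2.symm)⟩
      exact Nat.card_unique
    omega
  -- edge counting
  have himg : ∀ e ∈ (contractEdges G F').edgeSet \ {s(B, A)},
      Sym2.map φ e ∈ (contractEdges G F).edgeSet := by
    intro e
    refine Sym2.ind (fun c d he => ?_) e
    obtain ⟨heE, hne⟩ := he
    have hadj := (SimpleGraph.mem_edgeSet _).mp heE
    obtain ⟨hcd, y, z, hyz, hy, hz⟩ := contractEdges_adj'.mp hadj
    have hφne : φ c ≠ φ d := by
      intro h
      rcases (phieq c d).mp h with h' | ⟨h1, h2⟩ | ⟨h1, h2⟩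
      · exact hcd h'
      · refine (?_ : s(c, d) ≠ s(B, A)) (by rw [h1, h2])
        simpa using hne
      · refine (?_ : s(c, d) ≠ s(B, A)) (by rw [h1, h2, Sym2.eq_swap])
        simpa using hne
    rw [Sym2.map_pair_eq]
    refine (SimpleGraph.mem_edgeSet _).mpr (contractEdges_adj'.mpr ⟨hφne, y, z, hyz, ?_, ?_⟩)
    · rw [← hy]; exact (φmk y).symm
    · rw [← hz]; exact (φmk z).symm
  have h4 : ∀ c₁ d₁ c₂ d₂ : (SimpleGraph.fromEdgeSet F').ConnectedComponent,
      s(c₁, d₁) ∈ (contractEdges G F').edgeSet \ {s(B, A)} →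
      s(c₂, d₂) ∈ (contractEdges G F').edgeSet \ {s(B, A)} →
      φ c₁ = φ c₂ → φ d₁ = φ d₂ → s(c₁, d₁) = s(c₂, d₂) := by
    intro c₁ d₁ c₂ d₂ h₁ h₂ hc hd
    obtain ⟨h₁E, h₁ne⟩ := h₁
    obtain ⟨h₂E, h₂ne⟩ := h₂
    have hadj₁ := (SimpleGraph.mem_edgeSet _).mp h₁E
    have hadj₂ := (SimpleGraph.mem_edgeSet _).mp h₂E
    rcases (phieq c₁ c₂).mp hc with hcc | ⟨hB1, hA2⟩ | ⟨hA1, hB2⟩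
    · rcases (phieq d₁ d₂).mp hd with hdd | ⟨hB1', hA2'⟩ | ⟨hA1', hB2'⟩
      · rw [hcc, hdd]
      · refine ((hdagger c₁ ?_ ?_)).elim
        · rw [hB1'] at hadj₁; exact hadj₁.symm
        · rw [hA2', ← hcc] at hadj₂; exact hadj₂.symm
      · refine ((hdagger c₁ ?_ ?_)).elim
        · rw [hB2', ← hcc] at hadj₂; exact hadj₂.symm
        · rw [hA1'] at hadj₁; exact hadj₁.symm
    · rcases (phieq d₁ d₂).mp hd with hdd | ⟨hB1', hA2'⟩ | ⟨hA1', hB2'⟩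
      · refine ((hdagger d₁ ?_ ?_)).elim
        · rw [hB1] at hadj₁; exact hadj₁
        · rw [hA2, ← hdd] at hadj₂; exact hadj₂
      · rw [hB1, hB1'] at hadj₁
        exact ((contractEdges G F').loopless.irrefl B hadj₁).elim
      · exact absurd (by rw [hB1, hA1'] : s(c₁, d₁) = s(B, A)) (by simpa using h₁ne)
    · rcases (phieq d₁ d₂).mp hd with hdd | ⟨hB1', hA2'⟩ | ⟨hA1', hB2'⟩
      · refine ((hdagger d₁ ?_ ?_)).elim
        · rw [hB2, ← hdd] at hadj₂; exact hadj₂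
        · rw [hA1] at hadj₁; exact hadj₁
      · exact absurd ((by rw [hA1, hB1'] : s(c₁, d₁) = s(A, B)).trans Sym2.eq_swap)
          (by simpa using h₁ne)
      · rw [hA1, hA1'] at hadj₁
        exact ((contractEdges G F').loopless.irrefl A hadj₁).elim
  have hinj : Set.InjOn (Sym2.map φ) ((contractEdges G F').edgeSet \ {s(B, A)}) := by
    intro e₁
    refine Sym2.ind (fun c₁ d₁ h₁ => ?_) e₁
    intro e₂
    refine Sym2.ind (fun c₂ d₂ h₂ heq => ?_) e₂
    rw [Sym2.map_pair_eq, Sym2.map_pair_eq, Sym2.eq_iff] at heq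
    rcases heq with ⟨hc, hd⟩ | ⟨hc, hd⟩
    · exact h4 _ _ _ _ h₁ h₂ hc hd
    · have := h4 c₁ d₁ d₂ c₂ h₁ (by rw [show s(d₂, c₂) = s(c₂, d₂) from Sym2.eq_swap]; exact h₂) hc hd
      exact this.trans Sym2.eq_swap
  have hEKfin : ((contractEdges G F).edgeSet).Finite := Set.toFinite _
  have hstep1 : ((contractEdges G F').edgeSet).ncard ≤
      ((contractEdges G F').edgeSet \ {s(B, A)}).ncard + 1 := by
    calc ((contractEdges G F').edgeSet).ncard
        ≤ (((contractEdges G F').edgeSet \ {s(B, A)}) ∪ {s(B, A)}).ncard :=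
          Set.ncard_le_ncard (Set.subset_diff_union _ _) (Set.Finite.union (Set.toFinite _) (Set.toFinite _))
      _ ≤ ((contractEdges G F').edgeSet \ {s(B, A)}).ncard + ({s(B, A)} : Set _).ncard :=
          Set.ncard_union_le _ _
      _ = ((contractEdges G F').edgeSet \ {s(B, A)}).ncard + 1 := by rw [Set.ncard_singleton]
  have hstep2 : ((contractEdges G F').edgeSet \ {s(B, A)}).ncard ≤
      ((contractEdges G F).edgeSet).ncard := by
    rw [← Set.ncard_image_of_injOn hinj]
    refine Set.ncard_le_ncard ?_ hEKfin
    rintro e ⟨e', he', rfl⟩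
    exact himg e' he'
  refine ⟨hconn', ?_⟩
  have h2 := hTl.2
  haveI := hTl.1.nonempty
  have hpos : 0 < Nat.card (SimpleGraph.fromEdgeSet F).ConnectedComponent := Nat.card_pos
  rw [hcards]
  omega

private lemma getVert_eq_support_getD {G : SimpleGraph V} {a b : V} (p : G.Walk a b) (d : V) :
    ∀ i, i ≤ p.length → p.support.getD i d = p.getVert i := by
  induction p with
  | nil =>
    intro i hi
    have : i = 0 := by simpa using hi
    subst this
    simp
  | cons hadj p ih =>
    intro i hi
    cases i with
    | zero => simp
    | succ n =>
      rw [SimpleGraph.Walk.support_cons, List.getD_cons_succ,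
        SimpleGraph.Walk.getVert_cons_succ]
      exact ih n (by simpa using hi)

/-- Let `P = (u₀, …, u_{q+1})` be a path in `G` with `q ≥ k + 2` in which every vertex
`u_i`, `1 ≤ i ≤ q + 1`, has degree exactly `2`.  If `F ⊆ E(G)` is inclusion-wise minimal
with `G/F ∈ 𝕋_ℓ` and `|F| ≤ k`, then no edge of `F` is incident to any of `u₁, …, u_q`. -/
theorem minimal_solution_avoids_long_degree_two_path {V : Type} [Fintype V]
    (G : SimpleGraph V) [DecidableRel G.Adj] (k ℓ q : ℕ) (hq : k + 2 ≤ q)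
    (a b : V) (p : G.Walk a b) (hpath : p.IsPath) (hlen : p.length = q + 1)
    (hdeg : ∀ x ∈ p.support.tail, G.degree x = 2)
    (F : Set (Sym2 V)) (hFE : F ⊆ G.edgeSet)
    (hTl : MemTl (contractEdges G F) ℓ)
    (hmin : ∀ F' : Set (Sym2 V), F' ⊂ F → ¬ MemTl (contractEdges G F') ℓ)
    (hcard : F.ncard ≤ k) :
    ∀ e ∈ F, ∀ x ∈ p.support.tail.dropLast, x ∉ e := by
  classical
  intro e he x hx hxe
  set u : ℕ → V := p.getVert with hudef
  have hsuplen : p.support.length = q + 2 := by rw [SimpleGraph.Walk.length_support, hlen]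
  have hgetelem : ∀ i, (h : i < q + 2) → p.support[i] = u i := by
    intro i h
    rw [← List.getD_eq_getElem p.support a (by omega)]
    exact getVert_eq_support_getD p a i (by omega)
  have hadj : ∀ i, i ≤ q → G.Adj (u i) (u (i + 1)) := by
    intro i hi
    exact p.adj_getVert_succ (by omega)
  have hinjV : ∀ i j, i ≤ q + 1 → j ≤ q + 1 → u i = u j → i = j := by
    intro i j hi hj hij
    have hnd : p.support.Nodup := hpath.support_nodup
    rw [← hgetelem i (by omega), ← hgetelem j (by omega)] at hij
    exact (hnd.getElem_inj_iff).mp hij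
  have hdeg' : ∀ i, 1 ≤ i → i ≤ q + 1 → G.degree (u i) = 2 := by
    intro i h1 h2
    have hlt : i - 1 < p.support.tail.length := by
      rw [List.length_tail, hsuplen]; omega
    have h' : i - 1 + 1 = i := by omega
    have : p.support.tail[i-1] = u i := by
      rw [List.getElem_tail, hgetelem (i - 1 + 1) (by omega), h']
    exact hdeg (u i) (this ▸ List.getElem_mem hlt)
  have hnb : ∀ i, 1 ≤ i → i ≤ q → G.neighborSet (u i) = {u (i - 1), u (i + 1)} := by
    intro i h1 h2
    have ha1 : G.Adj (u i) (u (i - 1)) := by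
      have := hadj (i - 1) (by omega)
      have h' : i - 1 + 1 = i := by omega
      rw [h'] at this
      exact this.symm
    have ha2 : G.Adj (u i) (u (i + 1)) := hadj i h2
    have hne : u (i - 1) ≠ u (i + 1) := fun h => by
      have := hinjV (i - 1) (i + 1) (by omega) (by omega) h; omega
    have hsub : ({u (i - 1), u (i + 1)} : Finset V) ⊆ G.neighborFinset (u i) := by
      intro t ht
      rw [Finset.mem_insert, Finset.mem_singleton] at ht
      rcases ht with rfl | rfl
      · rwa [SimpleGraph.mem_neighborFinset]
      · rwa [SimpleGraph.mem_neighborFinset]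
    have hcard2 : (G.neighborFinset (u i)).card ≤ ({u (i - 1), u (i + 1)} : Finset V).card := by
      rw [Finset.card_pair hne, ← SimpleGraph.degree]
      exact (hdeg' i h1 (by omega)).le
    have heq := Finset.eq_of_subset_of_card_le hsub hcard2
    rw [← Set.coe_toFinset (G.neighborSet (u i)), ← SimpleGraph.neighborFinset_def, ← heq,
      Finset.coe_insert, Finset.coe_singleton]
  set Epath : ℕ → Sym2 V := fun i => s(u i, u (i + 1)) with hEdef
  have hEinj : ∀ i j, i ≤ q → j ≤ q → Epath i = Epath j → i = j := by
    intro i j hi hj hij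
    rw [hEdef] at hij
    simp only [Sym2.eq_iff] at hij
    rcases hij with ⟨h1, h2⟩ | ⟨h1, h2⟩
    · exact hinjV i j (by omega) (by omega) h1
    · have := hinjV i (j + 1) (by omega) (by omega) h1
      have := hinjV (i + 1) j (by omega) (by omega) h2
      omega
  have hFsetcard : ∀ (T : Set (Sym2 V)) (I : Finset ℕ),
      (∀ i ∈ I, i ≤ q ∧ Epath i ∈ T) → I.card ≤ T.ncard := by
    intro T I hIT
    have hinjI : Set.InjOn (fun i => Epath i) I :=
      fun i hi j hj hij => hEinj i j (hIT i hi).1 (hIT j hj).1 hij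
    calc I.card = (I.image (fun i => Epath i)).card := (Finset.card_image_of_injOn hinjI).symm
      _ = (↑(I.image (fun i => Epath i)) : Set (Sym2 V)).ncard := (Set.ncard_coe_finset _).symm
      _ ≤ T.ncard := by
          refine Set.ncard_le_ncard ?_ (Set.toFinite T)
          intro e' he'
          simp only [Finset.coe_image, Set.mem_image, Finset.mem_coe] at he'
          obtain ⟨i, hi, rfl⟩ := he'
          exact (hIT i hi).2
  have hmain_count : ∀ (α β γ : ℕ) (T : Set (Sym2 V)), T.ncard + 1 ≤ F.ncard →
      (∀ i, i ≤ q → ¬(i = α ∨ i = β ∨ i = γ) → Epath i ∈ T) → False := by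
    intro α β γ T hTc hT
    set I : Finset ℕ := (Finset.range (q + 1)).filter (fun i => ¬(i = α ∨ i = β ∨ i = γ))
      with hIdef
    have h3 : ({α, β, γ} : Finset ℕ).card ≤ 3 := by
      refine le_trans (Finset.card_insert_le _ _) ?_
      refine Nat.succ_le_succ ?_
      refine le_trans (Finset.card_insert_le _ _) ?_
      simp
    have hsdiff : (Finset.range (q + 1)) \ ({α, β, γ} : Finset ℕ) ⊆ I := by
      intro i hi
      rw [Finset.mem_sdiff] at hi
      rw [hIdef, Finset.mem_filter]
      refine ⟨hi.1, ?_⟩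
      simpa using hi.2
    have h5 : (Finset.range (q + 1)).card ≤
        ((Finset.range (q + 1)) \ ({α, β, γ} : Finset ℕ)).card + ({α, β, γ} : Finset ℕ).card :=
      Finset.card_le_card_sdiff_add_card
    have h6 := Finset.card_le_card hsdiff
    rw [Finset.card_range] at h5
    have hIcard : q - 2 ≤ I.card := by omega
    have := hFsetcard T I (by
      intro i hi
      rw [hIdef, Finset.mem_filter, Finset.mem_range] at hi
      exact ⟨by omega, hT i (by omega) hi.2⟩)
    have hk : F.ncard ≤ k := hcard
    omega
  have hcut : ∀ (F'' : Set (Sym2 V)), F'' ⊆ F → ∀ m₁ m₂, m₁ < m₂ → m₂ ≤ q →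
      Epath m₁ ∉ F'' → Epath m₂ ∉ F'' → ∀ i, m₁ < i → i ≤ m₂ → ∀ z,
      (SimpleGraph.fromEdgeSet F'').Reachable (u i) z →
      ∃ j, m₁ < j ∧ j ≤ m₂ ∧ z = u j := by
    intro F'' hsub m₁ m₂ hm12 hm2q hm₁ hm₂ i hi1 hi2 z hz
    refine reach_closed (s := {z | ∃ j, m₁ < j ∧ j ≤ m₂ ∧ z = u j}) ?_ ⟨i, hi1, hi2, rfl⟩ hz
    rintro y ⟨j, hj1, hj2, rfl⟩ t ht
    rw [SimpleGraph.fromEdgeSet_adj] at ht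
    obtain ⟨htF, htne⟩ := ht
    have hmemn : t ∈ G.neighborSet (u j) := (SimpleGraph.mem_edgeSet G).mp (hFE (hsub htF))
    rw [hnb j (by omega) (by omega)] at hmemn
    rcases hmemn with h | h
    · -- t = u (j - 1)
      by_cases hj : j = m₁ + 1
      · exfalso
        apply hm₁
        rw [h, hj] at htF
        have h' : m₁ + 1 - 1 = m₁ := by omega
        rw [h'] at htF
        rwa [Sym2.eq_swap] at htF
      · exact ⟨j - 1, by omega, by omega, h⟩
    · -- t = u (j + 1)
      rw [Set.mem_singleton_iff] at h
      by_cases hj : j = m₂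
      · exfalso
        apply hm₂
        rw [h, hj] at htF
        exact htF
      · exact ⟨j + 1, by omega, by omega, h⟩
  have hsing : ∀ (F'' : Set (Sym2 V)), F'' ⊆ F → ∀ i, 1 ≤ i → i ≤ q →
      Epath (i - 1) ∉ F'' → Epath i ∉ F'' → ∀ z,
      (SimpleGraph.fromEdgeSet F'').Reachable (u i) z → z = u i := by
    intro F'' hsub i h1 h2 hp1 hp2 z hz
    obtain ⟨j, hj1, hj2, rfl⟩ := hcut F'' hsub (i - 1) i (by omega) h2 hp1 hp2 i (by omega)
      (le_refl i) z hz
    have : j = i := by omega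
    rw [this]
  -- the offending edge gives a path edge in F
  obtain ⟨i, hi1, hiq, rfl⟩ : ∃ i, 1 ≤ i ∧ i ≤ q ∧ x = u i := by
    have hlt : ∃ (j : ℕ) (h : j < p.support.tail.dropLast.length),
        p.support.tail.dropLast[j] = x := List.mem_iff_getElem.mp hx
    obtain ⟨j, hjl, hjx⟩ := hlt
    have hlen2 : p.support.tail.dropLast.length = q := by
      rw [List.length_dropLast, List.length_tail, hsuplen]
      omega
    refine ⟨j + 1, by omega, by omega, ?_⟩
    rw [← hjx, List.getElem_dropLast, List.getElem_tail, hgetelem (j + 1) (by omega)]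
  have hS : ∃ j, j ≤ q ∧ Epath j ∈ F := by
    have hadje : G.Adj (u i) (Sym2.Mem.other hxe) := by
      have := Sym2.other_spec hxe
      rw [← this] at he
      exact (SimpleGraph.mem_edgeSet G).mp (hFE he)
    have hmemn : Sym2.Mem.other hxe ∈ G.neighborSet (u i) := hadje
    rw [hnb i hi1 hiq] at hmemn
    have hespec := Sym2.other_spec hxe
    rcases hmemn with h | h
    · refine ⟨i - 1, by omega, ?_⟩
      have h' : i - 1 + 1 = i := by omega
      rw [hEdef]
      show s(u (i - 1), u (i - 1 + 1)) ∈ F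
      rw [h', Sym2.eq_swap, ← h]
      rwa [hespec]
    · rw [Set.mem_singleton_iff] at h
      refine ⟨i, hiq, ?_⟩
      rw [hEdef]
      show s(u i, u (i + 1)) ∈ F
      rw [← h]
      rwa [hespec]
  have hconnG : G.Connected := connected_of_contract hFE hTl.1
  have hFfin : F.Finite := Set.toFinite F
  by_cases hI : ∃ b0, b0 + 1 ≤ q ∧ Epath b0 ∈ F ∧ Epath (b0 + 1) ∉ F
  · obtain ⟨b0, hb0q, hbF, hb1F⟩ := hI
    set f : Sym2 V := s(u (b0 + 1), u b0) with hfdef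
    have hfF : f ∈ F := by
      rw [hfdef, Sym2.eq_swap]
      exact hbF
    set F' : Set (Sym2 V) := F \ {f} with hF'def
    have hF'sub : F' ⊆ F := Set.diff_subset
    have hF'card : F'.ncard + 1 ≤ F.ncard := by
      have h1 : F'.ncard = F.ncard - 1 := Set.ncard_diff_singleton_of_mem hfF
      have h2 : 0 < F.ncard := (Set.ncard_pos hFfin).mpr ⟨f, hfF⟩
      omega
    have hEF' : ∀ i, i ≤ q → (Epath i ∈ F' ↔ Epath i ∈ F ∧ i ≠ b0) := by
      intro i hi
      rw [hF'def]
      constructor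
      · rintro ⟨h1, h2⟩
        refine ⟨h1, fun hib => h2 ?_⟩
        rw [Set.mem_singleton_iff, hib, hfdef]
        show s(u b0, u (b0 + 1)) = s(u (b0 + 1), u b0)
        exact Sym2.eq_swap
      · rintro ⟨h1, h2⟩
        refine ⟨h1, fun hmem => h2 ?_⟩
        rw [Set.mem_singleton_iff] at hmem
        refine hEinj i b0 hi (by omega) ?_
        rw [hmem, hfdef]
        show s(u (b0 + 1), u b0) = s(u b0, u (b0 + 1))
        exact Sym2.eq_swap
    have hEb0F' : Epath b0 ∉ F' := fun h => ((hEF' b0 (by omega)).mp h).2 rfl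
    have hEb1F' : Epath (b0 + 1) ∉ F' := fun h => hb1F ((hEF' _ (by omega)).mp h).1
    have hexcl : (SimpleGraph.fromEdgeSet F').connectedComponentMk (u b0) =
          (SimpleGraph.fromEdgeSet F').connectedComponentMk (u (b0 + 2)) ∨
        ¬ (contractEdges G F').Adj
          ((SimpleGraph.fromEdgeSet F').connectedComponentMk (u b0))
          ((SimpleGraph.fromEdgeSet F').connectedComponentMk (u (b0 + 2))) := by
      by_cases heqc : (SimpleGraph.fromEdgeSet F').connectedComponentMk (u b0) =
          (SimpleGraph.fromEdgeSet F').connectedComponentMk (u (b0 + 2))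
      · exact Or.inl heqc
      right
      intro hAdj
      obtain ⟨hne0, y, z, hyz, hy, hz⟩ := contractEdges_adj'.mp hAdj
      have ry : (SimpleGraph.fromEdgeSet F').Reachable (u b0) y :=
        (SimpleGraph.ConnectedComponent.eq.mp hy).symm
      have rz : (SimpleGraph.fromEdgeSet F').Reachable (u (b0 + 2)) z :=
        (SimpleGraph.ConnectedComponent.eq.mp hz).symm
      by_cases hL : ∃ m, m < b0 ∧ Epath m ∉ F'
      · obtain ⟨mw, hmw1, hmw2⟩ := hL
        set m₁ := Nat.findGreatest (fun m => Epath m ∉ F') (b0 - 1) with hm₁def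
        have hm₁P : Epath m₁ ∉ F' := Nat.findGreatest_spec (P := fun m => Epath m ∉ F') (n := b0 - 1) (m := mw) (by omega) hmw2
        have hm₁b : m₁ ≤ b0 - 1 := Nat.findGreatest_le _
        have hmax : ∀ m, m₁ < m → m < b0 → Epath m ∈ F' := by
          intro m hm1 hm2
          by_contra hcon
          exact (Nat.findGreatest_is_greatest hm1 (by omega)) hcon
        obtain ⟨iy, hiy1, hiy2, rfl⟩ := hcut F' hF'sub m₁ b0 (by omega) (by omega) hm₁P hEb0F'
          b0 (by omega) (le_refl _) y ry
        have hzn : z ∈ G.neighborSet (u iy) := hyz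
        rw [hnb iy (by omega) (by omega)] at hzn
        rcases hzn with hzz | hzz
        · by_cases hiym : iy = m₁ + 1
          · have hzm : z = u m₁ := by rw [hzz, hiym]; exact congrArg u (by omega)
            by_cases hL0 : ∃ m₀, m₀ < m₁ ∧ Epath m₀ ∉ F'
            · obtain ⟨m₀, hm₀1, hm₀2⟩ := hL0
              obtain ⟨j2, hj21, hj22, hj23⟩ := hcut F' hF'sub m₀ b0 (by omega) (by omega)
                hm₀2 hEb0F' m₁ (by omega) (by omega) (u (b0 + 2))
                (by rw [← hzm]; exact rz.symm)
              have := hinjV (b0 + 2) j2 (by omega) (by omega) hj23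
              omega
            · by_cases hR0 : ∃ m₃, b0 + 2 ≤ m₃ ∧ m₃ ≤ q ∧ Epath m₃ ∉ F'
              · obtain ⟨m₃, hm₃1, hm₃2, hm₃3⟩ := hR0
                obtain ⟨j2, hj21, hj22, hj23⟩ := hcut F' hF'sub (b0 + 1) m₃ (by omega)
                  (by omega) hEb1F' hm₃3 (b0 + 2) (by omega) (by omega) (u m₁)
                  (by rw [← hzm]; exact rz)
                have := hinjV m₁ j2 (by omega) (by omega) hj23
                omega
              · refine hmain_count m₁ b0 (b0 + 1) F' hF'card ?_
                intro i2 hi2 hno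
                push_neg at hno
                have hpos : i2 < m₁ ∨ (m₁ < i2 ∧ i2 < b0) ∨ b0 + 2 ≤ i2 := by omega
                rcases hpos with hp | ⟨hp1, hp2⟩ | hp
                · by_contra hc
                  exact hL0 ⟨i2, hp, hc⟩
                · exact hmax i2 hp1 hp2
                · by_contra hc
                  exact hR0 ⟨i2, hp, hi2, hc⟩
          · obtain ⟨j2, hj21, hj22, hj23⟩ := hcut F' hF'sub m₁ b0 (by omega) (by omega)
              hm₁P hEb0F' (iy - 1) (by omega) (by omega) (u (b0 + 2))
              (by rw [← hzz]; exact rz.symm)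
            have := hinjV (b0 + 2) j2 (by omega) (by omega) hj23
            omega
        · rw [Set.mem_singleton_iff] at hzz
          by_cases hiyb : iy = b0
          · have hzb : z = u (b0 + 1) := by rw [hzz, hiyb]
            have := hsing F' hF'sub (b0 + 1) (by omega) (by omega)
              (by rw [show b0 + 1 - 1 = b0 from rfl]; exact hEb0F') hEb1F' (u (b0 + 2))
              (by rw [← hzb]; exact rz.symm)
            have := hinjV (b0 + 2) (b0 + 1) (by omega) (by omega) this
            omega
          · obtain ⟨j2, hj21, hj22, hj23⟩ := hcut F' hF'sub m₁ b0 (by omega) (by omega)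
              hm₁P hEb0F' (iy + 1) (by omega) (by omega) (u (b0 + 2))
              (by rw [← hzz]; exact rz.symm)
            have := hinjV (b0 + 2) j2 (by omega) (by omega) hj23
            omega
      · by_cases hR : ∃ m', b0 + 2 ≤ m' ∧ m' ≤ q ∧ Epath m' ∉ F'
        · set m' := Nat.find hR with hm'def
          have hm'spec := Nat.find_spec hR
          have hm'min : ∀ m2, b0 + 2 ≤ m2 → m2 < m' → Epath m2 ∈ F' := by
            intro m2 h1 h2
            by_contra hc
            exact Nat.find_min hR h2 ⟨h1, by omega, hc⟩
          obtain ⟨iz, hiz1, hiz2, rfl⟩ := hcut F' hF'sub (b0 + 1) m' (by omega)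
            (by omega) hEb1F' hm'spec.2.2 (b0 + 2) (by omega) (by omega) z rz
          have hyn : y ∈ G.neighborSet (u iz) := hyz.symm
          rw [hnb iz (by omega) (by omega)] at hyn
          rcases hyn with hyy | hyy
          · by_cases hizb : iz = b0 + 2
            · have hyb : y = u (b0 + 1) := by rw [hyy, hizb]; exact congrArg u (by omega)
              have := hsing F' hF'sub (b0 + 1) (by omega) (by omega)
                (by rw [show b0 + 1 - 1 = b0 from rfl]; exact hEb0F') hEb1F' (u b0)
                (by rw [← hyb]; exact ry.symm)
              have := hinjV b0 (b0 + 1) (by omega) (by omega) this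
              omega
            · obtain ⟨j2, hj21, hj22, hj23⟩ := hcut F' hF'sub (b0 + 1) m' (by omega)
                (by omega) hEb1F' hm'spec.2.2 (iz - 1) (by omega) (by omega) (u b0)
                (by rw [← hyy]; exact ry.symm)
              have := hinjV b0 j2 (by omega) (by omega) hj23
              omega
          · rw [Set.mem_singleton_iff] at hyy
            by_cases hizm : iz = m'
            · by_cases hR2 : ∃ m'', m' < m'' ∧ m'' ≤ q ∧ Epath m'' ∉ F'
              · obtain ⟨m'', hm''1, hm''2, hm''3⟩ := hR2
                obtain ⟨j2, hj21, hj22, hj23⟩ := hcut F' hF'sub m' m'' (by omega)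
                  (by omega) hm'spec.2.2 hm''3 (m' + 1) (by omega) (by omega) (u b0)
                  (by rw [← hizm, ← hyy]; exact ry.symm)
                have := hinjV b0 j2 (by omega) (by omega) hj23
                omega
              · refine hmain_count b0 (b0 + 1) m' F' hF'card ?_
                intro i2 hi2 hno
                push_neg at hno
                have hpos : i2 < b0 ∨ (b0 + 2 ≤ i2 ∧ i2 < m') ∨ m' < i2 := by omega
                rcases hpos with hp | ⟨hp1, hp2⟩ | hp
                · by_contra hc
                  exact hL ⟨i2, hp, hc⟩
                · exact hm'min i2 hp1 hp2
                · by_contra hc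
                  exact hR2 ⟨i2, hp, hi2, hc⟩
            · obtain ⟨j2, hj21, hj22, hj23⟩ := hcut F' hF'sub (b0 + 1) m' (by omega)
                (by omega) hEb1F' hm'spec.2.2 (iz + 1) (by omega) (by omega) (u b0)
                (by rw [← hyy]; exact ry.symm)
              have := hinjV b0 j2 (by omega) (by omega) hj23
              omega
        · refine hmain_count b0 (b0 + 1) (b0 + 1) F' hF'card ?_
          intro i2 hi2 hno
          push_neg at hno
          have hpos : i2 < b0 ∨ b0 + 2 ≤ i2 := by omega
          rcases hpos with hp | hp
          · by_contra hc
            exact hL ⟨i2, hp, hc⟩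
          · by_contra hc
            exact hR ⟨i2, hp, hi2, hc⟩
    have hnx : G.neighborSet (u (b0 + 1)) = {u b0, u (b0 + 2)} := by
      have := hnb (b0 + 1) (by omega) (by omega)
      rw [show b0 + 1 - 1 = b0 from rfl, show b0 + 1 + 1 = b0 + 2 from rfl] at this
      exact this
    have hvw0 : u b0 ≠ u (b0 + 2) := fun h => by
      have := hinjV b0 (b0 + 2) (by omega) (by omega) h; omega
    have hgF0 : s(u (b0 + 1), u (b0 + 2)) ∉ F := by
      intro h
      apply hb1F
      show s(u (b0 + 1), u (b0 + 1 + 1)) ∈ F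
      rw [show b0 + 1 + 1 = b0 + 2 from rfl]
      exact h
    have hconn' : (contractEdges G F').Connected := contract_connected hconnG F'
    have hstep := abstract_step G F hFE (u (b0 + 1)) (u b0) (u (b0 + 2)) hvw0 hnx hfF hgF0
      hexcl hTl hconn'
    exact hmin F' (Set.sdiff_singleton_ssubset.mpr hfF) hstep
  · push_neg at hI
    obtain ⟨j₀, hj₀q, hj₀F⟩ := hS
    have hup : ∀ i0, Epath i0 ∈ F → ∀ m, i0 ≤ m → m ≤ q → Epath m ∈ F := by
      intro i0 hiF m hm1
      induction m, hm1 using Nat.le_induction with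
      | base => intro _; exact hiF
      | succ n hn ih => intro hnq; exact hI n (by omega) (ih (by omega))
    have hEx : ∃ i0, i0 ≤ q ∧ Epath i0 ∈ F := ⟨j₀, hj₀q, hj₀F⟩
    set b' := Nat.find hEx with hb'def
    have hb'spec : b' ≤ q ∧ Epath b' ∈ F := Nat.find_spec hEx
    have hb'min : ∀ m, m < b' → Epath m ∉ F := by
      intro m hm hc
      exact Nat.find_min hEx hm ⟨by omega, hc⟩
    have hall : ∀ m, b' ≤ m → m ≤ q → Epath m ∈ F := hup b' hb'spec.2
    have hb3 : 3 ≤ b' := by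
      by_contra hb3
      push_neg at hb3
      have := hFsetcard F (Finset.Ico b' (q + 1)) (by
        intro i2 hi2
        rw [Finset.mem_Ico] at hi2
        exact ⟨by omega, hall i2 hi2.1 (by omega)⟩)
      rw [Nat.card_Ico] at this
      omega
    have hfF : s(u b', u (b' + 1)) ∈ F := hb'spec.2
    set F' : Set (Sym2 V) := F \ {s(u b', u (b' + 1))} with hF'def
    have hF'sub : F' ⊆ F := Set.diff_subset
    have hF'card : F'.ncard + 1 ≤ F.ncard := by
      have h1 : F'.ncard = F.ncard - 1 := Set.ncard_diff_singleton_of_mem hfF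
      have h2 : 0 < F.ncard := (Set.ncard_pos hFfin).mpr ⟨_, hfF⟩
      omega
    have hEb'F' : Epath b' ∉ F' := by
      intro h
      exact h.2 rfl
    have hnotF' : ∀ m, Epath m ∉ F → Epath m ∉ F' := fun m hm h => hm (hF'sub h)
    have hEb1' : Epath (b' - 1) ∉ F' := hnotF' _ (hb'min _ (by omega))
    have hEb2' : Epath (b' - 2) ∉ F' := hnotF' _ (hb'min _ (by omega))
    have hEb3' : Epath (b' - 3) ∉ F' := hnotF' _ (hb'min _ (by omega))
    have hexcl : (SimpleGraph.fromEdgeSet F').connectedComponentMk (u (b' + 1)) =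
          (SimpleGraph.fromEdgeSet F').connectedComponentMk (u (b' - 1)) ∨
        ¬ (contractEdges G F').Adj
          ((SimpleGraph.fromEdgeSet F').connectedComponentMk (u (b' + 1)))
          ((SimpleGraph.fromEdgeSet F').connectedComponentMk (u (b' - 1))) := by
      right
      intro hAdj
      obtain ⟨hne0, y, z, hyz, hy, hz⟩ := contractEdges_adj'.mp hAdj
      have ry : (SimpleGraph.fromEdgeSet F').Reachable (u (b' + 1)) y :=
        (SimpleGraph.ConnectedComponent.eq.mp hy).symm
      have rz : (SimpleGraph.fromEdgeSet F').Reachable (u (b' - 1)) z :=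
        (SimpleGraph.ConnectedComponent.eq.mp hz).symm
      have hz1 : z = u (b' - 1) := by
        refine hsing F' hF'sub (b' - 1) (by omega) (by omega) ?_ hEb1' z rz
        rw [show b' - 1 - 1 = b' - 2 by omega]
        exact hEb2'
      have hyn : y ∈ G.neighborSet (u (b' - 1)) := by
        rw [hz1] at hyz
        exact hyz.symm
      rw [hnb (b' - 1) (by omega) (by omega)] at hyn
      rcases hyn with hyy | hyy
      · have hy2 : y = u (b' - 2) := by rw [hyy]; exact congrArg u (by omega)
        have := hsing F' hF'sub (b' - 2) (by omega) (by omega)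
          (by rw [show b' - 2 - 1 = b' - 3 by omega]; exact hEb3') hEb2' (u (b' + 1))
          (by rw [← hy2]; exact ry.symm)
        have := hinjV (b' + 1) (b' - 2) (by omega) (by omega) this
        omega
      · rw [Set.mem_singleton_iff] at hyy
        have hy2 : y = u b' := by rw [hyy]; exact congrArg u (by omega)
        have := hsing F' hF'sub b' (by omega) (by omega) hEb1' hEb'F' (u (b' + 1))
          (by rw [← hy2]; exact ry.symm)
        have := hinjV (b' + 1) b' (by omega) (by omega) this
        omega
    have hnx : G.neighborSet (u b') = {u (b' + 1), u (b' - 1)} := by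
      rw [hnb b' (by omega) (by omega)]
      exact Set.pair_comm _ _
    have hvw0 : u (b' + 1) ≠ u (b' - 1) := fun h => by
      have := hinjV (b' + 1) (b' - 1) (by omega) (by omega) h; omega
    have hgF0 : s(u b', u (b' - 1)) ∉ F := by
      intro h
      apply hb'min (b' - 1) (by omega)
      show s(u (b' - 1), u (b' - 1 + 1)) ∈ F
      rw [show b' - 1 + 1 = b' by omega, Sym2.eq_swap]
      exact h
    have hconn' : (contractEdges G F').Connected := contract_connected hconnG F'
    have hstep := abstract_step G F hFE (u b') (u (b' + 1)) (u (b' - 1)) hvw0 hnx hfF hgF0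
      hexcl hTl hconn'
    exact hmin F' (Set.sdiff_singleton_ssubset.mpr hfF) hstep
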